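/- Let J be an invertible Hermitian N×N complex matrix with exactly κ negative eigenvalues, and let A₁, A₂ be J-selfadjoint N×N matrices (J·Aⱼ = Aⱼᴴ·J) such that the subspace D = {x ∈ ℂᴺ : A₁x = A₂x} has codimension n in ℂᴺ. Assume all eigenvalues of A₁ and A₂ are real and semisimple (both matrices are diagonalizable). Then for every open real interval Δ, the total multiplicities of the eigenvalues of A₁ in Δ and of A₂ in Δ differ by at most n + 2κ. -/

import Mathlib

open Matrix

/-- `A` is diagonalizable (all eigenvalues semisimple). -/
def Diagonalizable {N : ℕ} (A : Matrix (Fin N) (Fin N) ℂ) : Prop :=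
  ∃ P D : Matrix (Fin N) (Fin N) ℂ, IsUnit P.det ∧ D.IsDiag ∧ A = P * D * P⁻¹

/-- Total multiplicity of the eigenvalues of `A` in the real set `Δ`
(for a diagonalizable matrix this is the sum of the algebraic multiplicities). -/
noncomputable def eigCount {N : ℕ} (A : Matrix (Fin N) (Fin N) ℂ) (Δ : Set ℝ) : ℕ :=
  Module.finrank ℂ ↥(⨆ μ ∈ Δ, Module.End.eigenspace (Matrix.toLin' A) (μ : ℂ))

namespace Stmt9Aux

variable {N : ℕ}
/-- The indefinite form induced by `J`. -/
noncomputable def bform (J : Matrix (Fin N) (Fin N) ℂ) (x y : Fin N → ℂ) : ℂ :=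
  star x ⬝ᵥ (J *ᵥ y)

lemma sum_dotProduct' {ι : Type*} (s : Finset ι) (f : ι → (Fin N → ℂ)) (z : Fin N → ℂ) :
    (∑ i ∈ s, f i) ⬝ᵥ z = ∑ i ∈ s, f i ⬝ᵥ z := by
  simp only [dotProduct, Finset.sum_apply, Finset.sum_mul]
  exact Finset.sum_comm

lemma bform_sum_left (J : Matrix (Fin N) (Fin N) ℂ) {ι : Type*} (s : Finset ι)
    (f : ι → (Fin N → ℂ)) (y : Fin N → ℂ) :
    bform J (∑ i ∈ s, f i) y = ∑ i ∈ s, bform J (f i) y := by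
  simp only [bform, star_sum, sum_dotProduct']

lemma bform_sum_right (J : Matrix (Fin N) (Fin N) ℂ) {ι : Type*} (s : Finset ι)
    (f : ι → (Fin N → ℂ)) (x : Fin N → ℂ) :
    bform J x (∑ i ∈ s, f i) = ∑ i ∈ s, bform J x (f i) := by
  simp only [bform, ← Matrix.mulVecLin_apply, map_sum]
  simp only [dotProduct, Finset.sum_apply, Finset.mul_sum]
  exact Finset.sum_comm

lemma bform_smul_left (J : Matrix (Fin N) (Fin N) ℂ) (c : ℂ) (x y : Fin N → ℂ) :
    bform J (c • x) y = (starRingEnd ℂ) c * bform J x y := by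
  simp only [bform, star_smul, smul_dotProduct, star_trivial, smul_eq_mul]
  rfl

lemma bform_smul_right (J : Matrix (Fin N) (Fin N) ℂ) (c : ℂ) (x y : Fin N → ℂ) :
    bform J x (c • y) = c * bform J x y := by
  simp only [bform, ← Matrix.mulVecLin_apply, _root_.map_smul, dotProduct_smul, smul_eq_mul]

lemma bform_expand (J : Matrix (Fin N) (Fin N) ℂ) (v : Fin N → (Fin N → ℂ)) (c d : Fin N → ℂ) :
    bform J (∑ i, c i • v i) (∑ j, d j • v j)
      = ∑ i, ∑ j, (starRingEnd ℂ) (c i) * d j * bform J (v i) (v j) := by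
  rw [bform_sum_left]
  refine Finset.sum_congr rfl fun i _ => ?_
  rw [bform_sum_right]
  refine Finset.sum_congr rfl fun j _ => ?_
  rw [bform_smul_left, bform_smul_right]
  ring

lemma bform_diag_expand (J : Matrix (Fin N) (Fin N) ℂ) (v : Fin N → (Fin N → ℂ))
    (g : Fin N → ℝ)
    (horth : ∀ i j, i ≠ j → bform J (v i) (v j) = 0)
    (hdiag : ∀ i, bform J (v i) (v i) = (g i : ℂ)) (c d : Fin N → ℂ) :
    bform J (∑ i, c i • v i) (∑ j, d j • v j)
      = ∑ i, (starRingEnd ℂ) (c i) * d i * (g i : ℂ) := by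
  rw [bform_expand]
  refine Finset.sum_congr rfl fun i _ => ?_
  rw [Finset.sum_eq_single i]
  · rw [hdiag]
  · intro j _ hj
    rw [horth i j (Ne.symm hj), mul_zero]
  · simp
lemma re_bform_nonneg_aux (J : Matrix (Fin N) (Fin N) ℂ) (hJ : J.IsHermitian)
    (x : Fin N → ℂ) :
    (bform J x x).re
      = ∑ i, hJ.eigenvalues i * Complex.normSq (((star (hJ.eigenvectorUnitary : Matrix (Fin N) (Fin N) ℂ)) *ᵥ x) i) := by
  set V : Matrix (Fin N) (Fin N) ℂ := (hJ.eigenvectorUnitary : Matrix (Fin N) (Fin N) ℂ) with hV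
  set y : Fin N → ℂ := (star V) *ᵥ x with hy
  have hsy : star x ᵥ* V = star y := by
    rw [hy, star_mulVec]
    congr 1
    rw [Matrix.star_eq_conjTranspose, Matrix.conjTranspose_conjTranspose]
  have hJx : J *ᵥ x = V *ᵥ (Matrix.diagonal ((RCLike.ofReal ∘ hJ.eigenvalues : Fin N → ℂ)) *ᵥ y) := by
    conv_lhs => rw [hJ.spectral_theorem]
    rw [Unitary.conjStarAlgAut_apply, hy, ← Matrix.mulVec_mulVec, ← Matrix.mulVec_mulVec]
  rw [bform, hJx, Matrix.dotProduct_mulVec, hsy]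
  simp only [dotProduct, Matrix.mulVec_diagonal, Function.comp_apply, Pi.star_apply]
  rw [Complex.re_sum]
  refine Finset.sum_congr rfl fun i _ => ?_
  have h1 : (star (y i)) * (((hJ.eigenvalues i : ℝ) : ℂ) * y i)
      = ((hJ.eigenvalues i * Complex.normSq (y i) : ℝ) : ℂ) := by
    rw [Complex.star_def,
      show (starRingEnd ℂ) (y i) * (((hJ.eigenvalues i : ℝ) : ℂ) * y i)
        = ((hJ.eigenvalues i : ℝ) : ℂ) * (y i * (starRingEnd ℂ) (y i)) by ring,
      Complex.mul_conj]
    push_cast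
    ring
  show (star (y i) * (((hJ.eigenvalues i : ℝ) : ℂ) * y i)).re
      = hJ.eigenvalues i * Complex.normSq (y i)
  rw [h1, Complex.ofReal_re]

/-- Any subspace on which the `J`-form is negative definite has dimension at most the
number of negative eigenvalues of `J`. -/
lemma negdef_finrank_le (J : Matrix (Fin N) (Fin N) ℂ) (hJ : J.IsHermitian) (κ : ℕ)
    (hκ : (Finset.univ.filter fun i => hJ.eigenvalues i < 0).card = κ)
    (U : Submodule ℂ (Fin N → ℂ))
    (hU : ∀ x ∈ U, x ≠ 0 → (bform J x x).re < 0) :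
    Module.finrank ℂ U ≤ κ := by
  classical
  set V : Matrix (Fin N) (Fin N) ℂ := (hJ.eigenvectorUnitary : Matrix (Fin N) (Fin N) ℂ) with hV
  let L : (Fin N → ℂ) →ₗ[ℂ] ({i // hJ.eigenvalues i < 0} → ℂ) :=
    { toFun := fun x i => ((star V) *ᵥ x) i.1
      map_add' := by intro a b; funext i; simp [Matrix.mulVec_add]
      map_smul' := by intro c a; funext i; simp [Matrix.mulVec_smul] }
  have hinj : Function.Injective (L ∘ₗ U.subtype) := by
    rw [← LinearMap.ker_eq_bot, LinearMap.ker_eq_bot']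
    intro m hm
    have hm' : ∀ i : {i // hJ.eigenvalues i < 0}, ((star V) *ᵥ (m : Fin N → ℂ)) i.1 = 0 := by
      intro i
      exact congrFun hm i
    by_contra hm0
    have hmne : (m : Fin N → ℂ) ≠ 0 := by
      simpa [Submodule.coe_eq_zero] using fun h => hm0 (by simpa using h)
    have hlt := hU m m.2 hmne
    have hge : 0 ≤ (bform J (m : Fin N → ℂ) (m : Fin N → ℂ)).re := by
      rw [re_bform_nonneg_aux J hJ]
      refine Finset.sum_nonneg fun i _ => ?_
      rcases lt_or_ge (hJ.eigenvalues i) 0 with h | h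
      · rw [hm' ⟨i, h⟩]
        simp
      · exact mul_nonneg h (Complex.normSq_nonneg _)
    exact absurd hlt (not_lt.mpr hge)
  have := LinearMap.finrank_le_finrank_of_injective hinj
  rwa [Module.finrank_pi ℂ, Fintype.card_subtype, hκ] at this

lemma bform_sum_sum (J : Matrix (Fin N) (Fin N) ℂ) {ι κ' : Type*} [Fintype ι] [Fintype κ']
    (f : ι → ℂ) (u : ι → (Fin N → ℂ)) (g : κ' → ℂ) (w : κ' → (Fin N → ℂ)) :
    bform J (∑ i, f i • u i) (∑ j, g j • w j)
      = ∑ i, ∑ j, (starRingEnd ℂ) (f i) * g j * bform J (u i) (w j) := by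
  rw [bform_sum_left]
  refine Finset.sum_congr rfl fun i _ => ?_
  rw [bform_sum_right]
  refine Finset.sum_congr rfl fun j _ => ?_
  rw [bform_smul_left, bform_smul_right]
  ring

lemma sum_fiber {α : Type*} [AddCommMonoid α] (dR : Fin N → ℝ) (r : ℝ) (F : Fin N → α)
    (hF : ∀ j, dR j ≠ r → F j = 0) :
    ∑ j, F j = ∑ a : {j : Fin N // dR j = r}, F a.1 := by
  classical
  rw [← Finset.sum_subtype (Finset.univ.filter fun j => dR j = r) (by simp) F]
  exact (Finset.sum_filter_of_ne (fun x _ hx => by_contra fun h => hx (hF x h))).symm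

/-- A `J`-orthogonal eigenbasis. -/
structure GoodBasis (J A : Matrix (Fin N) (Fin N) ℂ) where
  v : Module.Basis (Fin N) ℂ (Fin N → ℂ)
  μ : Fin N → ℝ
  g : Fin N → ℝ
  eig : ∀ i, A *ᵥ v i = ((μ i : ℝ) : ℂ) • v i
  orth : ∀ i j, i ≠ j → bform J (v i) (v j) = 0
  diag : ∀ i, bform J (v i) (v i) = ((g i : ℝ) : ℂ)
  gne : ∀ i, g i ≠ 0

lemma exists_goodBasis (hN : 0 < N) (J A : Matrix (Fin N) (Fin N) ℂ)
    (hJinv : IsUnit J.det) (hJ : J.IsHermitian) (hA : J * A = Aᴴ * J)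
    (hd : Diagonalizable A) (hr : spectrum ℂ A ⊆ Set.range (Complex.ofReal)) :
    Nonempty (GoodBasis J A) := by
  classical
  obtain ⟨P, D, hP, hD, hAeq⟩ := hd
  have hPinv : P⁻¹ * P = 1 := Matrix.nonsing_inv_mul P hP
  have hAP : A * P = P * D := by
    rw [hAeq, Matrix.mul_assoc, hPinv, Matrix.mul_one]
  set colP : Fin N → (Fin N → ℂ) := fun j i => P i j with hcolP
  have hcol : ∀ j, A *ᵥ colP j = D j j • colP j := by
    intro j
    funext i
    have h1 : (A *ᵥ colP j) i = (A * P) i j := by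
      simp [Matrix.mulVec, dotProduct, Matrix.mul_apply, hcolP]
    rw [h1, hAP, Matrix.mul_apply,
      Finset.sum_eq_single j (fun k _ hk => by rw [hD hk]; ring) (by simp)]
    simp [hcolP, mul_comm]
  have hcolne : ∀ j, colP j ≠ 0 := by
    intro j hj
    have h0 : P *ᵥ Pi.single j 1 = 0 := by
      rw [Matrix.mulVec_single]
      rw [MulOpposite.op_one, one_smul]
      exact hj
    have : P.det = 0 := by
      rw [← Matrix.exists_mulVec_eq_zero_iff]
      exact ⟨Pi.single j 1, fun h => one_ne_zero (α := ℂ) (by simpa using congrFun h j), h0⟩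
    rw [this] at hP
    simp at hP
  have hreal : ∀ j, ∃ r : ℝ, D j j = (r : ℂ) := by
    intro j
    have hmem : D j j ∈ spectrum ℂ A := by
      rw [spectrum.mem_iff]
      intro hu
      rw [Matrix.isUnit_iff_isUnit_det] at hu
      have hdet : (algebraMap ℂ (Matrix (Fin N) (Fin N) ℂ) (D j j) - A).det = 0 := by
        rw [← Matrix.exists_mulVec_eq_zero_iff]
        refine ⟨colP j, hcolne j, ?_⟩
        rw [Matrix.sub_mulVec, hcol j, Algebra.algebraMap_eq_smul_one,
          Matrix.smul_mulVec, Matrix.one_mulVec, sub_self]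
      rw [hdet] at hu
      simp at hu
    obtain ⟨r, hr'⟩ := hr hmem
    exact ⟨r, hr'.symm⟩
  choose dR hdR using hreal
  set M : Matrix (Fin N) (Fin N) ℂ := Pᴴ * J * P with hMdef
  have hM : M.IsHermitian := by
    unfold Matrix.IsHermitian
    rw [hMdef, Matrix.conjTranspose_mul, Matrix.conjTranspose_mul,
      Matrix.conjTranspose_conjTranspose, hJ.eq, Matrix.mul_assoc]
  have hMdet : IsUnit M.det := by
    rw [hMdef, Matrix.det_mul, Matrix.det_mul, Matrix.det_conjTranspose]
    exact (hP.star.mul hJinv).mul hP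
  have hMB : ∀ i j, M i j = bform J (colP i) (colP j) := by
    intro i j
    rw [hMdef, bform]
    simp only [Matrix.mul_apply, Matrix.conjTranspose_apply, Matrix.mulVec, dotProduct,
      Pi.star_apply, hcolP, Finset.sum_mul, Finset.mul_sum]
    rw [Finset.sum_comm]
    refine Finset.sum_congr rfl fun k _ => Finset.sum_congr rfl fun l _ => ?_
    ring
  have hMD : M * D = Dᴴ * M := by
    have h1 : Pᴴ * (J * A) * P = Pᴴ * (Aᴴ * J) * P := by rw [hA]
    calc M * D = Pᴴ * J * (P * D) := by rw [hMdef, Matrix.mul_assoc, Matrix.mul_assoc]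
    _ = Pᴴ * (J * A) * P := by
        rw [← hAP]
        simp only [Matrix.mul_assoc]
    _ = Pᴴ * (Aᴴ * J) * P := h1
    _ = (A * P)ᴴ * (J * P) := by
        rw [Matrix.conjTranspose_mul]
        simp only [Matrix.mul_assoc]
    _ = Dᴴ * M := by
        rw [hAP, Matrix.conjTranspose_mul, hMdef]
        simp only [Matrix.mul_assoc]
  have hblock : ∀ i j, dR i ≠ dR j → M i j = 0 := by
    intro i j hne
    have h1 : (M * D) i j = M i j * D j j := by
      rw [Matrix.mul_apply, Finset.sum_eq_single j (fun k _ hk => by rw [hD hk]; ring) (by simp)]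
    have h2 : (Dᴴ * M) i j = D i i * M i j := by
      rw [Matrix.mul_apply, Finset.sum_eq_single i
        (fun k _ hk => by rw [Matrix.conjTranspose_apply, hD hk]; simp) (by simp)]
      rw [Matrix.conjTranspose_apply, hdR i]
      simp [Complex.star_def, Complex.conj_ofReal, hdR i]
    have h3 : M i j * D j j = D i i * M i j := by rw [← h1, ← h2, hMD]
    rw [hdR i, hdR j] at h3
    have h4 : M i j * ((dR j : ℂ) - (dR i : ℂ)) = 0 := by ring_nf; linear_combination h3
    rcases mul_eq_zero.mp h4 with h | h
    · exact h
    · exfalso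
      apply hne
      have : (dR j : ℂ) = (dR i : ℂ) := by linear_combination h
      exact_mod_cast this.symm
  -- fiber Gram matrices
  let Gmat : (r : ℝ) → Matrix {i : Fin N // dR i = r} {i : Fin N // dR i = r} ℂ :=
    fun r a b => M a.1 b.1
  have hGherm : ∀ r, (Gmat r).IsHermitian := by
    intro r
    ext a b
    rw [Matrix.conjTranspose_apply]
    show star (M b.1 a.1) = M a.1 b.1
    conv_rhs => rw [← hM]
    rw [Matrix.conjTranspose_apply]
  have hGdet : ∀ r, IsUnit (Gmat r).det := by
    intro r
    rw [isUnit_iff_ne_zero]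
    intro h0
    obtain ⟨z, hz, hzeq⟩ := (Matrix.exists_mulVec_eq_zero_iff).mpr h0
    set w : Fin N → ℂ := fun i => if h : dR i = r then z ⟨i, h⟩ else 0 with hwdef
    have hw : M *ᵥ w = 0 := by
      funext i
      show ∑ j, M i j * w j = 0
      rw [sum_fiber dR r _ (fun j hj => by simp [hwdef, dif_neg hj])]
      have hterm : ∀ a : {j : Fin N // dR j = r}, M i a.1 * w a.1 = M i a.1 * z a := by
        intro a
        obtain ⟨a, ha⟩ := a
        simp [hwdef, dif_pos ha]
      rw [Finset.sum_congr rfl fun a _ => hterm a]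
      by_cases hi : dR i = r
      · have : ∑ a : {j : Fin N // dR j = r}, M i a.1 * z a = (Gmat r *ᵥ z) ⟨i, hi⟩ := rfl
        rw [this, hzeq]
        rfl
      · refine Finset.sum_eq_zero fun a _ => ?_
        rw [hblock i a.1 (fun hh => hi (hh.trans a.2)), zero_mul]
    have hwne : w ≠ 0 := by
      obtain ⟨a, ha⟩ := Function.ne_iff.mp hz
      intro hw0
      apply ha
      have : w a.1 = 0 := by rw [hw0]; rfl
      obtain ⟨a, ha2⟩ := a
      simpa [hwdef, dif_pos ha2] using this
    have : M.det = 0 := Matrix.exists_mulVec_eq_zero_iff.mp ⟨w, hwne, hw⟩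
    rw [this] at hMdet
    simp at hMdet
  let W : (r : ℝ) → Matrix {i : Fin N // dR i = r} {i : Fin N // dR i = r} ℂ :=
    fun r => ((hGherm r).eigenvectorUnitary : Matrix _ _ ℂ)
  let lam : (r : ℝ) → {i : Fin N // dR i = r} → ℝ := fun r => (hGherm r).eigenvalues
  have hlamne : ∀ r a, lam r a ≠ 0 := by
    intro r a h0
    have hdet := (hGherm r).det_eq_prod_eigenvalues
    have : (Gmat r).det = 0 := by
      rw [hdet]
      refine Finset.prod_eq_zero (Finset.mem_univ a) ?_
      rw [show (hGherm r).eigenvalues a = lam r a from rfl, h0]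
      simp
    have hne : (Gmat r).det ≠ 0 := by simpa using hGdet r
    exact hne this
  have hdiagW : ∀ r, star (W r) * Gmat r * W r
      = Matrix.diagonal (RCLike.ofReal ∘ lam r) := fun r =>
    by
      have := (hGherm r).conjStarAlgAut_star_eigenvectorUnitary
      simp only [Unitary.conjStarAlgAut_apply, Unitary.coe_star, star_star] at this
      exact this
  let uu : (r : ℝ) → {i : Fin N // dR i = r} → (Fin N → ℂ) :=
    fun r b => ∑ a : {i : Fin N // dR i = r}, W r a b • colP a.1
  have huuA : ∀ r b, A *ᵥ uu r b = ((r : ℝ) : ℂ) • uu r b := by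
    intro r b
    show A *ᵥ (∑ a : {i : Fin N // dR i = r}, W r a b • colP a.1) = _
    rw [← Matrix.mulVecLin_apply, map_sum, Finset.smul_sum]
    refine Finset.sum_congr rfl fun a _ => ?_
    rw [_root_.map_smul, Matrix.mulVecLin_apply, hcol, hdR, a.2, smul_comm]
  have huuB_ne : ∀ (r r' : ℝ) (b : {i : Fin N // dR i = r}) (b' : {i : Fin N // dR i = r'}),
      r ≠ r' → bform J (uu r b) (uu r' b') = 0 := by
    intro r r' b b' hne
    show bform J (∑ a : {i : Fin N // dR i = r}, W r a b • colP a.1)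
      (∑ a : {i : Fin N // dR i = r'}, W r' a b' • colP a.1) = 0
    rw [bform_sum_sum]
    refine Finset.sum_eq_zero fun a _ => Finset.sum_eq_zero fun a' _ => ?_
    rw [← hMB, hblock a.1 a'.1 (by rw [a.2, a'.2]; exact hne), mul_zero]
  have huuB_eq : ∀ (r : ℝ) (b b' : {i : Fin N // dR i = r}),
      bform J (uu r b) (uu r b') = if b = b' then ((lam r b : ℝ) : ℂ) else 0 := by
    intro r b b'
    show bform J (∑ a : {i : Fin N // dR i = r}, W r a b • colP a.1)
      (∑ a : {i : Fin N // dR i = r}, W r a b' • colP a.1) = _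
    rw [bform_sum_sum]
    have hprod : (star (W r) * Gmat r * W r) b b'
        = ∑ a' : {i : Fin N // dR i = r}, ∑ a : {i : Fin N // dR i = r},
            (starRingEnd ℂ) (W r a b) * W r a' b' * bform J (colP a.1) (colP a'.1) := by
      rw [Matrix.mul_apply]
      refine Finset.sum_congr rfl fun a' _ => ?_
      rw [Matrix.mul_apply, Finset.sum_mul]
      refine Finset.sum_congr rfl fun a _ => ?_
      rw [← hMB, Matrix.star_eq_conjTranspose, Matrix.conjTranspose_apply]
      simp only [Complex.star_def]
      ring
    rw [Finset.sum_comm, ← hprod, hdiagW, Matrix.diagonal_apply]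
    split_ifs <;> rfl
  let u : Fin N → (Fin N → ℂ) := fun k => uu (dR k) ⟨k, rfl⟩
  let gv : Fin N → ℝ := fun k => lam (dR k) ⟨k, rfl⟩
  have hu_eq : ∀ (k : Fin N) (r : ℝ) (hk : dR k = r), u k = uu r ⟨k, hk⟩ := by
    intro k r hk
    subst hk
    rfl
  have horth_u : ∀ k l, k ≠ l → bform J (u k) (u l) = 0 := by
    intro k l hkl
    by_cases h : dR k = dR l
    · rw [hu_eq l (dR k) h.symm, show u k = uu (dR k) ⟨k, rfl⟩ from rfl, huuB_eq,
        if_neg (fun hc => hkl (congrArg Subtype.val hc))]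
    · exact huuB_ne _ _ _ _ h
  have hdiag_u : ∀ k, bform J (u k) (u k) = ((gv k : ℝ) : ℂ) := fun k => by
    rw [show u k = uu (dR k) ⟨k, rfl⟩ from rfl, huuB_eq, if_pos rfl]
  have heig_u : ∀ k, A *ᵥ u k = ((dR k : ℝ) : ℂ) • u k := fun k => huuA (dR k) ⟨k, rfl⟩
  have hgne : ∀ k, gv k ≠ 0 := fun k => hlamne (dR k) ⟨k, rfl⟩
  have hLI : LinearIndependent ℂ u := by
    rw [Fintype.linearIndependent_iff]
    intro c hc i
    have h0 : bform J (u i) (∑ k, c k • u k) = 0 := by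
      rw [hc]
      simp [bform, Matrix.mulVec_zero]
    rw [bform_sum_right] at h0
    rw [Finset.sum_congr rfl (fun k _ => bform_smul_right J (c k) (u i) (u k))] at h0
    rw [Finset.sum_eq_single i
      (fun k _ hk => by rw [horth_u i k (Ne.symm hk), mul_zero]) (by simp)] at h0
    rw [hdiag_u i] at h0
    rcases mul_eq_zero.mp h0 with h | h
    · exact h
    · exact absurd h (Complex.ofReal_ne_zero.mpr (hgne i))
  haveI : Nonempty (Fin N) := ⟨⟨0, hN⟩⟩
  have hcard : Fintype.card (Fin N) = Module.finrank ℂ (Fin N → ℂ) := by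
    simp [Module.finrank_pi]
  let v := basisOfLinearIndependentOfCardEqFinrank hLI hcard
  have hv : ⇑v = u := coe_basisOfLinearIndependentOfCardEqFinrank hLI hcard
  exact ⟨⟨v, dR, gv,
    fun i => by rw [hv]; exact heig_u i,
    fun i j hij => by rw [hv]; exact horth_u i j hij,
    fun i => by rw [hv]; exact hdiag_u i,
    hgne⟩⟩

variable {J A : Matrix (Fin N) (Fin N) ℂ}

lemma repr_eig (gb : GoodBasis J A) (x : Fin N → ℂ) :
    A *ᵥ x = ∑ i, (gb.v.repr x i * ((gb.μ i : ℝ) : ℂ)) • gb.v i := by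
  conv_lhs => rw [← gb.v.sum_repr x]
  rw [← Matrix.mulVecLin_apply, map_sum]
  refine Finset.sum_congr rfl fun i _ => ?_
  rw [_root_.map_smul, Matrix.mulVecLin_apply, gb.eig i, smul_smul, mul_comm]

open scoped Classical in
lemma finrank_span_image (b : Module.Basis (Fin N) ℂ (Fin N → ℂ)) (s : Set (Fin N)) :
    Module.finrank ℂ (Submodule.span ℂ (⇑b '' s)) = (Finset.univ.filter fun i => i ∈ s).card := by
  classical
  have hli : LinearIndependent ℂ (fun i : s => b i) :=
    b.linearIndependent.comp Subtype.val Subtype.val_injective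
  rw [Set.image_eq_range, finrank_span_eq_card hli]
  exact Fintype.card_subtype _

open scoped Classical in
lemma eigCount_eq (gb : GoodBasis J A) (Δ : Set ℝ) :
    eigCount A Δ = (Finset.univ.filter fun i => gb.μ i ∈ Δ).card := by
  classical
  have hspan : (⨆ μ ∈ Δ, Module.End.eigenspace (Matrix.toLin' A) (μ : ℂ))
      = Submodule.span ℂ (⇑gb.v '' {i | gb.μ i ∈ Δ}) := by
    apply le_antisymm
    · refine iSup₂_le fun t ht => ?_
      intro x hx
      rw [Module.End.mem_eigenspace_iff, Matrix.toLin'_apply] at hx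
      have h1 : ∑ i, (gb.v.repr x i * ((gb.μ i : ℝ) : ℂ) - (t : ℂ) * gb.v.repr x i) • gb.v i
          = 0 := by
        rw [Finset.sum_congr rfl (fun i _ => sub_smul _ _ _), Finset.sum_sub_distrib,
          ← repr_eig gb x, hx]
        have h2 : (t : ℂ) • x = ∑ i, ((t : ℂ) * gb.v.repr x i) • gb.v i := by
          conv_lhs => rw [← gb.v.sum_repr x]
          rw [Finset.smul_sum]
          exact Finset.sum_congr rfl fun i _ => smul_smul _ _ _
        rw [← h2, sub_self]
      have hz := Fintype.linearIndependent_iff.mp gb.v.linearIndependent _ h1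
      rw [Module.Basis.mem_span_image]
      intro i hi
      rw [Finset.mem_coe, Finsupp.mem_support_iff] at hi
      have hzi := hz i
      have hμ : ((gb.μ i : ℝ) : ℂ) = (t : ℂ) := by
        have hfac : gb.v.repr x i * (((gb.μ i : ℝ) : ℂ) - (t : ℂ)) = 0 := by
          linear_combination hzi
        rcases mul_eq_zero.mp hfac with h | h
        · exact absurd h hi
        · linear_combination h
      have hμ' : gb.μ i = t := by exact_mod_cast hμ
      simpa [hμ'] using ht
    · rw [Submodule.span_le]
      rintro _ ⟨i, hi, rfl⟩
      have hmem : gb.v i ∈ Module.End.eigenspace (Matrix.toLin' A) ((gb.μ i : ℝ) : ℂ) := by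
        rw [Module.End.mem_eigenspace_iff, Matrix.toLin'_apply]
        exact gb.eig i
      exact le_iSup₂ (f := fun (μ : ℝ) (_ : μ ∈ Δ) =>
        Module.End.eigenspace (Matrix.toLin' A) ((μ : ℝ) : ℂ)) (gb.μ i) hi hmem
  rw [eigCount, hspan, finrank_span_image]
  simp only [Set.mem_setOf_eq]

lemma bform_self (gb : GoodBasis J A) (x : Fin N → ℂ) :
    bform J x x = ((∑ i, Complex.normSq (gb.v.repr x i) * gb.g i : ℝ) : ℂ) := by
  conv_lhs => rw [← gb.v.sum_repr x]
  rw [bform_diag_expand J (⇑gb.v) gb.g gb.orth gb.diag, Complex.ofReal_sum]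
  refine Finset.sum_congr rfl fun i _ => ?_
  push_cast [Complex.normSq_eq_conj_mul_self]
  ring

lemma bform_self_A (gb : GoodBasis J A) (x : Fin N → ℂ) :
    bform J x (A *ᵥ x)
      = ((∑ i, Complex.normSq (gb.v.repr x i) * (gb.μ i * gb.g i) : ℝ) : ℂ) := by
  have h := bform_diag_expand J (⇑gb.v) gb.g gb.orth gb.diag (fun i => gb.v.repr x i)
    (fun i => gb.v.repr x i * ((gb.μ i : ℝ) : ℂ))
  rw [← repr_eig gb x, gb.v.sum_repr x] at h
  rw [h, Complex.ofReal_sum]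
  refine Finset.sum_congr rfl fun i _ => ?_
  push_cast [Complex.normSq_eq_conj_mul_self, _root_.map_mul, Complex.conj_ofReal]
  ring

lemma bform_A_A (gb : GoodBasis J A) (x : Fin N → ℂ) :
    bform J (A *ᵥ x) (A *ᵥ x)
      = ((∑ i, Complex.normSq (gb.v.repr x i) * (gb.μ i ^ 2 * gb.g i) : ℝ) : ℂ) := by
  have h := bform_diag_expand J (⇑gb.v) gb.g gb.orth gb.diag
    (fun i => gb.v.repr x i * ((gb.μ i : ℝ) : ℂ)) (fun i => gb.v.repr x i * ((gb.μ i : ℝ) : ℂ))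
  rw [← repr_eig gb x] at h
  rw [h, Complex.ofReal_sum]
  refine Finset.sum_congr rfl fun i _ => ?_
  push_cast [Complex.normSq_eq_conj_mul_self, _root_.map_mul, Complex.conj_ofReal]
  ring

/-- The quadratic functional used for the eigenvalue counting argument.  It only depends on
`x` and `A *ᵥ x`. -/
noncomputable def qform (J A : Matrix (Fin N) (Fin N) ℂ) (α β γ : ℝ) (x : Fin N → ℂ) : ℝ :=
  ((α : ℂ) * bform J x x + (β : ℂ) * bform J x (A *ᵥ x)
    + (γ : ℂ) * bform J (A *ᵥ x) (A *ᵥ x)).re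

lemma qform_eq (gb : GoodBasis J A) (α β γ : ℝ) (x : Fin N → ℂ) :
    qform J A α β γ x = ∑ i, Complex.normSq (gb.v.repr x i)
      * ((α + β * gb.μ i + γ * gb.μ i ^ 2) * gb.g i) := by
  rw [qform, bform_self gb, bform_self_A gb, bform_A_A gb,
    ← Complex.ofReal_mul, ← Complex.ofReal_mul, ← Complex.ofReal_mul,
    ← Complex.ofReal_add, ← Complex.ofReal_add, Complex.ofReal_re,
    Finset.mul_sum, Finset.mul_sum, Finset.mul_sum, ← Finset.sum_add_distrib,
    ← Finset.sum_add_distrib]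
  refine Finset.sum_congr rfl fun i _ => ?_
  ring

lemma card_filter_congr {p q : Fin N → Prop} {hp : DecidablePred p} {hq : DecidablePred q}
    (h : ∀ i, p i ↔ q i) :
    (@Finset.filter _ p hp Finset.univ).card = (@Finset.filter _ q hq Finset.univ).card := by
  have he : @Finset.filter _ p hp Finset.univ = @Finset.filter _ q hq Finset.univ := by
    ext i
    simp only [Finset.mem_filter, h i]
  rw [he]

lemma exists_repr_ne_zero (b : Module.Basis (Fin N) ℂ (Fin N → ℂ)) {x : Fin N → ℂ} (hx0 : x ≠ 0) :
    ∃ i, b.repr x i ≠ 0 := by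
  by_contra h
  push_neg at h
  apply hx0
  have hz : b.repr x = 0 := by
    ext i
    exact h i
  calc x = b.repr.symm (b.repr x) := (b.repr.symm_apply_apply x).symm
  _ = 0 := by rw [hz]; simp

open scoped Classical in
lemma card_neg_le (gb : GoodBasis J A) (hJ : J.IsHermitian) (κ : ℕ)
    (hκ : (Finset.univ.filter fun i => hJ.eigenvalues i < 0).card = κ) :
    (Finset.univ.filter fun i => gb.g i < 0).card ≤ κ := by
  have hU : ∀ x ∈ Submodule.span ℂ (⇑gb.v '' {i | gb.g i < 0}), x ≠ 0 →
      (bform J x x).re < 0 := by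
    intro x hx hx0
    rw [bform_self gb, Complex.ofReal_re]
    have hsupp := (Module.Basis.mem_span_image _).mp hx
    obtain ⟨i0, hi0⟩ := exists_repr_ne_zero gb.v hx0
    have hi0mem : gb.g i0 < 0 := hsupp (by rwa [Finset.mem_coe, Finsupp.mem_support_iff])
    have hlt : ∑ i, Complex.normSq (gb.v.repr x i) * gb.g i < ∑ _i : Fin N, (0 : ℝ) := by
      apply Finset.sum_lt_sum
      · intro i _
        by_cases h : gb.v.repr x i = 0
        · simp [h]
        · have hgi : gb.g i < 0 := hsupp (by rwa [Finset.mem_coe, Finsupp.mem_support_iff])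
          exact le_of_lt (mul_neg_of_pos_of_neg (Complex.normSq_pos.mpr h) hgi)
      · exact ⟨i0, Finset.mem_univ _,
          mul_neg_of_pos_of_neg (Complex.normSq_pos.mpr hi0) hi0mem⟩
    simpa using hlt
  have hle := negdef_finrank_le J hJ κ hκ _ hU
  rw [finrank_span_image] at hle
  simpa only [Set.mem_setOf_eq] using hle

lemma qform_pos (gb : GoodBasis J A) (α β γ : ℝ) (Δ : Set ℝ)
    (hp : ∀ t ∈ Δ, 0 < α + β * t + γ * t ^ 2) (x : Fin N → ℂ)
    (hx : x ∈ Submodule.span ℂ (⇑gb.v '' {i | gb.μ i ∈ Δ ∧ 0 < gb.g i})) (hx0 : x ≠ 0) :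
    0 < qform J A α β γ x := by
  rw [qform_eq gb]
  have hsupp := (Module.Basis.mem_span_image _).mp hx
  obtain ⟨i0, hi0⟩ := exists_repr_ne_zero gb.v hx0
  have hi0mem : gb.μ i0 ∈ Δ ∧ 0 < gb.g i0 :=
    hsupp (by rwa [Finset.mem_coe, Finsupp.mem_support_iff])
  apply Finset.sum_pos'
  · intro i _
    by_cases h : gb.v.repr x i = 0
    · simp [h]
    · have hmem : gb.μ i ∈ Δ ∧ 0 < gb.g i :=
        hsupp (by rwa [Finset.mem_coe, Finsupp.mem_support_iff])
      have hp1 := hp _ hmem.1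
      have h3 := Complex.normSq_nonneg (gb.v.repr x i)
      have h2 := hmem.2
      exact mul_nonneg h3 (mul_pos hp1 h2).le
  · refine ⟨i0, Finset.mem_univ _, ?_⟩
    have hp1 := hp _ hi0mem.1
    have h1 := hi0mem.2
    have h2 := Complex.normSq_pos.mpr hi0
    exact mul_pos h2 (mul_pos hp1 h1)

lemma qform_nonpos (gb : GoodBasis J A) (α β γ : ℝ) (Δ : Set ℝ)
    (hp : ∀ t ∉ Δ, α + β * t + γ * t ^ 2 ≤ 0) (x : Fin N → ℂ)
    (hx : x ∈ Submodule.span ℂ (⇑gb.v '' {i | gb.μ i ∉ Δ ∧ 0 < gb.g i})) :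
    qform J A α β γ x ≤ 0 := by
  rw [qform_eq gb]
  have hsupp := (Module.Basis.mem_span_image _).mp hx
  apply Finset.sum_nonpos
  intro i _
  by_cases h : gb.v.repr x i = 0
  · simp [h]
  · have hmem : gb.μ i ∉ Δ ∧ 0 < gb.g i :=
      hsupp (by rwa [Finset.mem_coe, Finsupp.mem_support_iff])
    have h1 := hp _ hmem.1
    have h2 := hmem.2
    have h3 := Complex.normSq_nonneg (gb.v.repr x i)
    have h4 : (α + β * gb.μ i + γ * gb.μ i ^ 2) * gb.g i ≤ 0 := by nlinarith
    nlinarith [mul_nonneg h3 (neg_nonneg.mpr h4)]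

open scoped Classical in
lemma key (J A₁ A₂ : Matrix (Fin N) (Fin N) ℂ)
    (hJinv : IsUnit J.det) (hJ : J.IsHermitian) (κ : ℕ)
    (hκ : (Finset.univ.filter fun i => hJ.eigenvalues i < 0).card = κ)
    (hA₁ : J * A₁ = A₁ᴴ * J) (hA₂ : J * A₂ = A₂ᴴ * J)
    (hd₁ : Diagonalizable A₁) (hd₂ : Diagonalizable A₂)
    (hr₁ : spectrum ℂ A₁ ⊆ Set.range (Complex.ofReal))
    (hr₂ : spectrum ℂ A₂ ⊆ Set.range (Complex.ofReal))
    (n : ℕ)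
    (hn : N - Module.finrank ℂ (LinearMap.ker (Matrix.toLin' (A₁ - A₂))) = n)
    (Δ : Set ℝ) (α β γ : ℝ)
    (hpos : ∀ t ∈ Δ, 0 < α + β * t + γ * t ^ 2)
    (hneg : ∀ t ∉ Δ, α + β * t + γ * t ^ 2 ≤ 0) :
    eigCount A₁ Δ ≤ eigCount A₂ Δ + (n + 2 * κ) := by
  have hdimtot : Module.finrank ℂ (Fin N → ℂ) = N := by simp [Module.finrank_pi]
  rcases Nat.eq_zero_or_pos N with hN | hN
  · have h1 : eigCount A₁ Δ ≤ Module.finrank ℂ (Fin N → ℂ) :=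
      Submodule.finrank_le _
    rw [hdimtot] at h1
    omega
  obtain ⟨gb₁⟩ := exists_goodBasis hN J A₁ hJinv hJ hA₁ hd₁ hr₁
  obtain ⟨gb₂⟩ := exists_goodBasis hN J A₂ hJinv hJ hA₂ hd₂ hr₂
  by_contra hcon
  push_neg at hcon
  set P₁ := Submodule.span ℂ (⇑gb₁.v '' {i | gb₁.μ i ∈ Δ ∧ 0 < gb₁.g i}) with hP₁
  set P₂ := Submodule.span ℂ (⇑gb₂.v '' {i | gb₂.μ i ∉ Δ ∧ 0 < gb₂.g i}) with hP₂
  set K := LinearMap.ker (Matrix.toLin' (A₁ - A₂)) with hK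
  have hneg1 := card_neg_le gb₁ hJ κ hκ
  have hneg2 := card_neg_le gb₂ hJ κ hκ
  have hd1 : (Finset.univ.filter fun i => gb₁.μ i ∈ Δ).card ≤ Module.finrank ℂ P₁ + κ := by
    rw [hP₁, finrank_span_image,
      card_filter_congr (p := fun i => i ∈ {i | gb₁.μ i ∈ Δ ∧ 0 < gb₁.g i})
        (q := fun i => gb₁.μ i ∈ Δ ∧ 0 < gb₁.g i) (fun i => Iff.rfl)]
    have hsub : (Finset.univ.filter fun i => gb₁.μ i ∈ Δ)
        ⊆ (Finset.univ.filter fun i => gb₁.μ i ∈ Δ ∧ 0 < gb₁.g i)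
          ∪ (Finset.univ.filter fun i => gb₁.g i < 0) := by
      intro i hi
      simp only [Finset.mem_filter, Finset.mem_union, Finset.mem_univ, true_and] at *
      rcases (gb₁.gne i).lt_or_gt with h | h
      · right; exact h
      · left; exact ⟨hi, h⟩
    exact le_trans (Finset.card_le_card hsub)
      (le_trans (Finset.card_union_le _ _) (Nat.add_le_add_left hneg1 _))
  have hd2 : N ≤ eigCount A₂ Δ + Module.finrank ℂ P₂ + κ := by
    rw [eigCount_eq gb₂, hP₂, finrank_span_image,
      card_filter_congr (p := fun i => i ∈ {i | gb₂.μ i ∉ Δ ∧ 0 < gb₂.g i})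
        (q := fun i => gb₂.μ i ∉ Δ ∧ 0 < gb₂.g i) (fun i => Iff.rfl)]
    have hsub : (Finset.univ : Finset (Fin N))
        ⊆ ((Finset.univ.filter fun i => gb₂.μ i ∈ Δ)
            ∪ (Finset.univ.filter fun i => gb₂.μ i ∉ Δ ∧ 0 < gb₂.g i))
          ∪ (Finset.univ.filter fun i => gb₂.g i < 0) := by
      intro i _
      simp only [Finset.mem_filter, Finset.mem_union, Finset.mem_univ, true_and]
      by_cases hμ : gb₂.μ i ∈ Δ
      · exact Or.inl (Or.inl hμ)
      · rcases (gb₂.gne i).lt_or_gt with h | h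
        · exact Or.inr h
        · exact Or.inl (Or.inr ⟨hμ, h⟩)
    calc N = (Finset.univ : Finset (Fin N)).card := by simp
      _ ≤ _ := Finset.card_le_card hsub
      _ ≤ ((Finset.univ.filter fun i => gb₂.μ i ∈ Δ)
            ∪ (Finset.univ.filter fun i => gb₂.μ i ∉ Δ ∧ 0 < gb₂.g i)).card
          + (Finset.univ.filter fun i => gb₂.g i < 0).card := Finset.card_union_le _ _
      _ ≤ ((Finset.univ.filter fun i => gb₂.μ i ∈ Δ).card
            + (Finset.univ.filter fun i => gb₂.μ i ∉ Δ ∧ 0 < gb₂.g i).card)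
          + (Finset.univ.filter fun i => gb₂.g i < 0).card :=
          Nat.add_le_add_right (Finset.card_union_le _ _) _
      _ ≤ ((Finset.univ.filter fun i => gb₂.μ i ∈ Δ).card
            + (Finset.univ.filter fun i => gb₂.μ i ∉ Δ ∧ 0 < gb₂.g i).card) + κ :=
          Nat.add_le_add_left hneg2 _
  have hc1 : eigCount A₁ Δ = (Finset.univ.filter fun i => gb₁.μ i ∈ Δ).card := eigCount_eq gb₁ Δ
  have hKle : Module.finrank ℂ K ≤ N := by
    have h := Submodule.finrank_le K
    rwa [hdimtot] at h
  have hG1 : Module.finrank ℂ K + Module.finrank ℂ P₂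
      ≤ Module.finrank ℂ (K ⊓ P₂ : Submodule ℂ (Fin N → ℂ)) + N := by
    have h1 := Submodule.finrank_sup_add_finrank_inf_eq K P₂
    have h2 : Module.finrank ℂ (K ⊔ P₂ : Submodule ℂ (Fin N → ℂ)) ≤ N := by
      have h := Submodule.finrank_le (K ⊔ P₂)
      rwa [hdimtot] at h
    omega
  have hG2 : Module.finrank ℂ P₁ + Module.finrank ℂ (K ⊓ P₂ : Submodule ℂ (Fin N → ℂ))
      ≤ Module.finrank ℂ (P₁ ⊓ (K ⊓ P₂) : Submodule ℂ (Fin N → ℂ)) + N := by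
    have h1 := Submodule.finrank_sup_add_finrank_inf_eq P₁ (K ⊓ P₂)
    have h2 : Module.finrank ℂ (P₁ ⊔ (K ⊓ P₂) : Submodule ℂ (Fin N → ℂ)) ≤ N := by
      have h := Submodule.finrank_le (P₁ ⊔ (K ⊓ P₂))
      rwa [hdimtot] at h
    omega
  have hposrank : 0 < Module.finrank ℂ (P₁ ⊓ (K ⊓ P₂) : Submodule ℂ (Fin N → ℂ)) := by
    omega
  obtain ⟨x, hxmem, hx0⟩ : ∃ x, x ∈ (P₁ ⊓ (K ⊓ P₂) : Submodule ℂ (Fin N → ℂ)) ∧ x ≠ 0 := by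
    by_contra h
    push_neg at h
    have hbot : (P₁ ⊓ (K ⊓ P₂) : Submodule ℂ (Fin N → ℂ)) = ⊥ := by
      rw [Submodule.eq_bot_iff]
      exact h
    rw [hbot, finrank_bot] at hposrank
    exact lt_irrefl 0 hposrank
  have hx1 : x ∈ P₁ := hxmem.1
  have hxK : x ∈ K := hxmem.2.1
  have hx2 : x ∈ P₂ := hxmem.2.2
  have hAx : A₁ *ᵥ x = A₂ *ᵥ x := by
    have h0 : Matrix.toLin' (A₁ - A₂) x = 0 := LinearMap.mem_ker.mp hxK
    rw [Matrix.toLin'_apply, Matrix.sub_mulVec] at h0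
    exact sub_eq_zero.mp h0
  have hq1 : 0 < qform J A₁ α β γ x := qform_pos gb₁ α β γ Δ hpos x hx1 hx0
  have hq2 : qform J A₂ α β γ x ≤ 0 := qform_nonpos gb₂ α β γ Δ hneg x hx2
  have heqq : qform J A₁ α β γ x = qform J A₂ α β γ x := by
    simp only [qform, hAx]
  linarith

lemma exists_poly (Δ : Set ℝ) (ho : IsOpen Δ) (hc : Δ.OrdConnected) :
    ∃ α β γ : ℝ, (∀ t ∈ Δ, 0 < α + β * t + γ * t ^ 2)
      ∧ (∀ t ∉ Δ, α + β * t + γ * t ^ 2 ≤ 0) := by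
  rcases Set.eq_empty_or_nonempty Δ with hΔ | hne
  · exact ⟨-1, 0, 0, by simp [hΔ], by intro t _; norm_num⟩
  have hmem : ∀ a ∈ Δ, ∀ b ∈ Δ, ∀ t, a ≤ t → t ≤ b → t ∈ Δ :=
    fun a ha b hb t h1 h2 => hc.out ha hb ⟨h1, h2⟩
  have hInf : BddBelow Δ → sInf Δ ∉ Δ := by
    intro hbb hin
    obtain ⟨ε, hε, hball⟩ := Metric.isOpen_iff.mp ho _ hin
    have h2 : sInf Δ - ε / 2 ∈ Δ := by
      apply hball
      rw [Metric.mem_ball, Real.dist_eq]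
      rw [abs_of_nonpos (by linarith)]
      linarith
    have := csInf_le hbb h2
    linarith
  have hSup : BddAbove Δ → sSup Δ ∉ Δ := by
    intro hba hin
    obtain ⟨ε, hε, hball⟩ := Metric.isOpen_iff.mp ho _ hin
    have h2 : sSup Δ + ε / 2 ∈ Δ := by
      apply hball
      rw [Metric.mem_ball, Real.dist_eq]
      rw [abs_of_nonneg (by linarith)]
      linarith
    have := le_csSup hba h2
    linarith
  rcases em (BddBelow Δ) with hbb | hbb <;> rcases em (BddAbove Δ) with hba | hba
  · -- bounded open interval
    set a := sInf Δ with hadef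
    set b := sSup Δ with hbdef
    obtain ⟨w, hw⟩ := id hne
    have hab : a ≤ b := le_trans (csInf_le hbb hw) (le_csSup hba hw)
    have hmemo : ∀ t ∈ Δ, a < t ∧ t < b := by
      intro t ht
      constructor
      · exact lt_of_le_of_ne (csInf_le hbb ht) (fun h => hInf hbb (h ▸ ht))
      · exact lt_of_le_of_ne (le_csSup hba ht) (fun h => hSup hba (h ▸ ht))
    have hio : ∀ t, a < t → t < b → t ∈ Δ := by
      intro t h1 h2
      obtain ⟨y, hy, hyt⟩ := exists_lt_of_csInf_lt hne h1
      obtain ⟨z, hz, htz⟩ := exists_lt_of_lt_csSup hne h2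
      exact hmem y hy z hz t (le_of_lt hyt) (le_of_lt htz)
    refine ⟨-(a * b), a + b, -1, ?_, ?_⟩
    · intro t ht
      obtain ⟨h1, h2⟩ := hmemo t ht
      nlinarith
    · intro t ht
      have h3 : t ≤ a ∨ b ≤ t := by
        by_contra hcc
        push_neg at hcc
        exact ht (hio t hcc.1 hcc.2)
      rcases h3 with h | h <;> nlinarith
  · -- Ioi a
    set a := sInf Δ with hadef
    have hmemo : ∀ t ∈ Δ, a < t := by
      intro t ht
      exact lt_of_le_of_ne (csInf_le hbb ht) (fun h => hInf hbb (h ▸ ht))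
    have hio : ∀ t, a < t → t ∈ Δ := by
      intro t h1
      obtain ⟨y, hy, hyt⟩ := exists_lt_of_csInf_lt hne h1
      obtain ⟨z, hz, htz⟩ := not_bddAbove_iff.mp hba t
      exact hmem y hy z hz t (le_of_lt hyt) (le_of_lt htz)
    refine ⟨-a, 1, 0, ?_, ?_⟩
    · intro t ht
      have := hmemo t ht
      norm_num
      linarith
    · intro t ht
      have h3 : t ≤ a := by
        by_contra hcc
        push_neg at hcc
        exact ht (hio t hcc)
      norm_num
      linarith
  · -- Iio b
    set b := sSup Δ with hbdef
    have hmemo : ∀ t ∈ Δ, t < b := by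
      intro t ht
      exact lt_of_le_of_ne (le_csSup hba ht) (fun h => hSup hba (h ▸ ht))
    have hio : ∀ t, t < b → t ∈ Δ := by
      intro t h1
      obtain ⟨y, hy, hyt⟩ := not_bddBelow_iff.mp hbb t
      obtain ⟨z, hz, htz⟩ := exists_lt_of_lt_csSup hne h1
      exact hmem y hy z hz t (le_of_lt hyt) (le_of_lt htz)
    refine ⟨b, -1, 0, ?_, ?_⟩
    · intro t ht
      have := hmemo t ht
      norm_num
      linarith
    · intro t ht
      have h3 : b ≤ t := by
        by_contra hcc
        push_neg at hcc
        exact ht (hio t hcc)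
      norm_num
      linarith
  · -- whole line
    refine ⟨1, 0, 0, by intro t _; norm_num, ?_⟩
    intro t ht
    exfalso
    obtain ⟨y, hy, hyt⟩ := not_bddBelow_iff.mp hbb t
    obtain ⟨z, hz, htz⟩ := not_bddAbove_iff.mp hba t
    exact ht (hmem y hy z hz t (le_of_lt hyt) (le_of_lt htz))

end Stmt9Aux

theorem stmt9 {N : ℕ} (J A₁ A₂ : Matrix (Fin N) (Fin N) ℂ)
    (hJinv : IsUnit J.det) (hJ : J.IsHermitian) (κ : ℕ)
    (hκ : (Finset.univ.filter fun i => hJ.eigenvalues i < 0).card = κ)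
    (hA₁ : J * A₁ = A₁ᴴ * J) (hA₂ : J * A₂ = A₂ᴴ * J)
    (hd₁ : Diagonalizable A₁) (hd₂ : Diagonalizable A₂)
    (hr₁ : spectrum ℂ A₁ ⊆ Set.range (Complex.ofReal))
    (hr₂ : spectrum ℂ A₂ ⊆ Set.range (Complex.ofReal))
    (n : ℕ)
    (hn : N - Module.finrank ℂ (LinearMap.ker (Matrix.toLin' (A₁ - A₂))) = n)
    (Δ : Set ℝ) (hΔopen : IsOpen Δ) (hΔconn : Δ.OrdConnected) :
    |(eigCount A₁ Δ : ℤ) - eigCount A₂ Δ| ≤ n + 2 * κ := by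
  obtain ⟨α, β, γ, hpos, hneg⟩ := Stmt9Aux.exists_poly Δ hΔopen hΔconn
  have h1 := Stmt9Aux.key J A₁ A₂ hJinv hJ κ hκ hA₁ hA₂ hd₁ hd₂ hr₁ hr₂ n hn Δ α β γ hpos hneg
  have hker : LinearMap.ker (Matrix.toLin' (A₂ - A₁))
      = LinearMap.ker (Matrix.toLin' (A₁ - A₂)) := by
    ext x
    simp only [LinearMap.mem_ker, Matrix.toLin'_apply, Matrix.sub_mulVec]
    constructor <;> intro h
    · have := neg_eq_zero.mpr h
      rwa [neg_sub] at this
    · have := neg_eq_zero.mpr h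
      rwa [neg_sub] at this
  have h2 := Stmt9Aux.key J A₂ A₁ hJinv hJ κ hκ hA₂ hA₁ hd₂ hd₁ hr₂ hr₁ n
    (by rw [hker]; exact hn) Δ α β γ hpos hneg
  rw [abs_sub_le_iff]
  constructor <;> (push_cast; omega)
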